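/- Let p = (p₁,p₂,p₃) be a vector of nonnegative reals with p₁+p₂+p₃ ≤ 4, let q^{(j)}_p and q_p be as defined below, and let q_N be a real number. Define the noisy port-based teleportation channel Λ(ρ) := ((1+3q_N q_p)/4)·ρ + Σ_{j=1}^{3} ((1−q_N q^{(j)}_p)/4)·σ_j ρ σ_j on 2×2 complex matrices, and let w := (1−q^{(1)}_p, 1−q^{(2)}_p, 1−q^{(3)}_p). Then Λ decomposes as a chain of the depolarizing channel and the environment-noise Pauli channel: for every 2×2 complex matrix ρ, Λ(ρ) = D_{q_N}(E_w(ρ)). -/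
import Mathlib


open Matrix Kronecker
open scoped ComplexOrder

noncomputable section

/-- 2×2 complex matrices (one qubit). -/
abbrev Mat2 := Matrix (Fin 2) (Fin 2) ℂ

/-- 4×4 complex matrices indexed by `(Fin 2) × (Fin 2)` (two qubits). -/
abbrev Mat4 := Matrix (Fin 2 × Fin 2) (Fin 2 × Fin 2) ℂ

/-- The identity and the three Pauli matrices: σ₀, σ₁, σ₂, σ₃. -/
def pauli : Fin 4 → Mat2 :=
  ![1, !![0, 1; 1, 0], !![0, -Complex.I; Complex.I, 0], !![1, 0; 0, -1]]

/-- Weights `(p₀, p₁, p₂, p₃)` with `p₀ := 4 - (p₁ + p₂ + p₃)`. -/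
def pw (p : Fin 3 → ℝ) : Fin 4 → ℝ := ![4 - (p 0 + p 1 + p 2), p 0, p 1, p 2]

/-- Single-qubit Pauli channel `E_p(ρ) = Σ_k (p_k/4) σ_k ρ σ_k`. -/
def pauliCh (p : Fin 3 → ℝ) (ρ : Mat2) : Mat2 :=
  ∑ k : Fin 4, ((pw p k / 4 : ℝ) : ℂ) • (pauli k * ρ * pauli k)

/-- `E_p ⊗ id` acting on two-qubit matrices. -/
def pauliFst (p : Fin 3 → ℝ) (ρ : Mat4) : Mat4 :=
  ∑ k : Fin 4, ((pw p k / 4 : ℝ) : ℂ) • ((pauli k ⊗ₖ 1) * ρ * (pauli k ⊗ₖ 1))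

/-- Local Pauli channel `E_p ⊗ E_p'` acting on two-qubit matrices. -/
def pauliLoc (p p' : Fin 3 → ℝ) (ρ : Mat4) : Mat4 :=
  ∑ k : Fin 4, ∑ l : Fin 4,
    ((pw p k * pw p' l / 16 : ℝ) : ℂ) •
      ((pauli k ⊗ₖ pauli l) * ρ * (pauli k ⊗ₖ pauli l))

/-- Partial transpose on the first qubit. -/
def ptranspose (ρ : Mat4) : Mat4 := fun x y => ρ (y.1, x.2) (x.1, y.2)

/-- Smallest (real) eigenvalue of a matrix. -/
def lambdaMin (A : Mat4) : ℝ :=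
  sInf {c : ℝ | ∃ v : Fin 2 × Fin 2 → ℂ, v ≠ 0 ∧ A *ᵥ v = (c : ℂ) • v}

/-- Measure of entanglement `M(ρ) = max (0, −2 λ_min(ρ^{T₁}))`. -/
def entMeasure (ρ : Mat4) : ℝ := max 0 (-2 * lambdaMin (ptranspose ρ))

/-- Two-qubit density matrix. -/
def IsDensity (ρ : Mat4) : Prop := ρ.PosSemidef ∧ ρ.trace = 1

/-- Depolarizing channel `D_q(ρ) = (1−q)·tr(ρ)·I/2 + q·ρ`. -/
def depol (q : ℝ) (ρ : Mat2) : Mat2 :=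
  (((1 - q : ℝ) : ℂ) * ρ.trace / 2) • (1 : Mat2) + ((q : ℝ) : ℂ) • ρ

/-- Basis vector `|ij⟩` of the two-qubit space. -/
def ket2 (i j : Fin 2) : (Fin 2 × Fin 2) → ℂ := fun x => if x = (i, j) then 1 else 0

/-- The four Bell states `|Ψ⁰⟩, |Ψ¹⟩, |Ψ²⟩, |Ψ³⟩`. -/
def bell : Fin 4 → ((Fin 2 × Fin 2) → ℂ) :=
  ![(((Real.sqrt 2 : ℝ) : ℂ))⁻¹ • (ket2 0 0 + ket2 1 1),
    (((Real.sqrt 2 : ℝ) : ℂ))⁻¹ • (ket2 0 1 + ket2 1 0),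
    (((Real.sqrt 2 : ℝ) : ℂ) * Complex.I)⁻¹ • (ket2 0 1 - ket2 1 0),
    (((Real.sqrt 2 : ℝ) : ℂ))⁻¹ • (ket2 0 0 - ket2 1 1)]

/-- Rank-one projector `|ψ⟩⟨ψ|`. -/
def proj (ψ : (Fin 2 × Fin 2) → ℂ) : Mat4 := fun a b => ψ a * (starRingEnd ℂ) (ψ b)

/-- The probabilities `q⁽¹⁾_p, q⁽²⁾_p, q⁽³⁾_p` (with `Δ_{ij} := p_i − p_j`). -/
def qvec (p : Fin 3 → ℝ) : Fin 3 → ℝ :=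
  ![(1 - p 0) ^ 2 - (1/4) * ((p 0 - p 1) ^ 2 - (p 1 - p 2) ^ 2 + (p 2 - p 0) ^ 2),
    (1 - p 1) ^ 2 - (1/4) * ((p 0 - p 1) ^ 2 + (p 1 - p 2) ^ 2 - (p 2 - p 0) ^ 2),
    (1 - p 2) ^ 2 - (1/4) * (-(p 0 - p 1) ^ 2 + (p 1 - p 2) ^ 2 + (p 2 - p 0) ^ 2)]

/-- `q_p`, the average of the `q⁽ʲ⁾_p`. -/
def qavg (p : Fin 3 → ℝ) : ℝ := (qvec p 0 + qvec p 1 + qvec p 2) / 3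

set_option maxHeartbeats 1000000 in
lemma conj1 (ρ : Mat2) : pauli 1 * ρ * pauli 1 = !![ρ 1 1, ρ 1 0; ρ 0 1, ρ 0 0] := by
  ext i j
  fin_cases i <;> fin_cases j <;>
    simp [pauli, Matrix.mul_apply, Fin.sum_univ_two, Matrix.vecMul, dotProduct]

set_option maxHeartbeats 1000000 in
lemma conj2 (ρ : Mat2) : pauli 2 * ρ * pauli 2 = !![ρ 1 1, -ρ 1 0; -ρ 0 1, ρ 0 0] := by
  ext i j
  fin_cases i <;> fin_cases j <;>
    simp [pauli, Matrix.mul_apply, Fin.sum_univ_two, Matrix.vecMul, dotProduct, Complex.I_sq] <;> ring_nf <;> simp [Complex.I_sq] <;> ring_nf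

set_option maxHeartbeats 1000000 in
lemma conj3 (ρ : Mat2) : pauli 3 * ρ * pauli 3 = !![ρ 0 0, -ρ 0 1; -ρ 1 0, ρ 1 1] := by
  ext i j
  fin_cases i <;> fin_cases j <;>
    simp [pauli, Matrix.mul_apply, Fin.sum_univ_two, Matrix.vecMul, dotProduct, Complex.I_sq] <;> ring_nf <;> simp [Complex.I_sq] <;> ring_nf

lemma pauli0 : pauli 0 = 1 := rfl

set_option maxHeartbeats 1000000 in
lemma key_chain (a b c qN : ℝ) (ρ : Mat2) :
    (((1 + qN * (a + b + c)) / 4 : ℝ) : ℂ) • ρ +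
        ((((1 - qN * a) / 4 : ℝ) : ℂ) • (pauli 1 * ρ * pauli 1) +
         (((1 - qN * b) / 4 : ℝ) : ℂ) • (pauli 2 * ρ * pauli 2) +
         (((1 - qN * c) / 4 : ℝ) : ℂ) • (pauli 3 * ρ * pauli 3))
      = depol qN (pauliCh ![1 - a, 1 - b, 1 - c] ρ) := by
  unfold depol pauliCh pw
  rw [Fin.sum_univ_four, conj1, conj2, conj3, pauli0, one_mul, mul_one]
  simp only [Matrix.cons_val_zero, Matrix.cons_val_one, Matrix.head_cons,
    Matrix.cons_val_two, Matrix.cons_val_three, Matrix.tail_cons]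
  ext i j
  fin_cases i <;> fin_cases j <;>
    simp [Matrix.trace, Matrix.diag, Fin.sum_univ_two, Matrix.one_apply, Complex.ext_iff] <;>
    first
      | exact ⟨trivial, trivial⟩
      | (constructor <;> ring)
      | ring

/-- the noisy PBT channel decomposes as `D_{q_N} ∘ E_w` with
`w = (1 − q⁽¹⁾_p, 1 − q⁽²⁾_p, 1 − q⁽³⁾_p)`. -/
theorem noisyPBT_chain_decomposition (p : Fin 3 → ℝ) (hp : ∀ i, 0 ≤ p i)
    (hpsum : p 0 + p 1 + p 2 ≤ 4) (qN : ℝ) (ρ : Mat2) :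
    (((1 + 3 * qN * qavg p) / 4 : ℝ) : ℂ) • ρ +
        ∑ j : Fin 3, (((1 - qN * qvec p j) / 4 : ℝ) : ℂ) •
          (pauli j.succ * ρ * pauli j.succ)
      = depol qN (pauliCh (fun i => 1 - qvec p i) ρ) := by
  have hf : (fun i => 1 - qvec p i) = ![1 - qvec p 0, 1 - qvec p 1, 1 - qvec p 2] := by
    funext i; fin_cases i <;> rfl
  have hc : (1 + 3 * qN * qavg p) / 4
      = (1 + qN * (qvec p 0 + qvec p 1 + qvec p 2)) / 4 := by
    unfold qavg; ring
  rw [hf, Fin.sum_univ_three, hc]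
  exact key_chain (qvec p 0) (qvec p 1) (qvec p 2) qN ρ
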